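/- arXiv:1701.00637 — 2 statements merged into one kernel-verified Lean document; each statement's English description precedes it below -/
import Mathlib

section
/- (Monotonicity of Takahashi translation) If M β-reduces to N in one step, then M* β-reduces to N*, and moreover the reduction can be done in at most |M*| − 1 steps. -/
inductive Lam : Type
  | var : ℕ → Lam
  | lam : Lam → Lam
  | app : Lam → Lam → Lam
  deriving DecidableEq

namespace Lam

/-- term size -/
def size : Lam → ℕ
  | var _ => 1
  | lam M => 1 + M.size
  | app M N => 1 + M.size + N.size

/-- lift (shift) free variables ≥ d by 1 -/
def lift (d : ℕ) : Lam → Lam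
  | var n => if n < d then var n else var (n+1)
  | lam M => lam (M.lift (d+1))
  | app M N => app (M.lift d) (N.lift d)

/-- capture-avoiding substitution of N for the free variable x (de Bruijn) -/
def subst : Lam → ℕ → Lam → Lam
  | var n, x, N => if n = x then N else if x < n then var (n-1) else var n
  | lam M, x, N => lam (M.subst (x+1) (N.lift 0))
  | app M P, x, N => app (M.subst x N) (P.subst x N)

/-- number of free occurrences of the variable x -/
def count : Lam → ℕ → ℕ
  | var n, x => if n = x then 1 else 0
  | lam M, x => M.count (x+1)
  | app M N, x => M.count x + N.count x

/-- one-step β-reduction -/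
inductive Step : Lam → Lam → Prop
  | beta (M N : Lam) : Step (app (lam M) N) (M.subst 0 N)
  | appL {M M' : Lam} (N : Lam) : Step M M' → Step (app M N) (app M' N)
  | appR (M : Lam) {N N' : Lam} : Step N N' → Step (app M N) (app M N')
  | abs {M M' : Lam} : Step M M' → Step (lam M) (lam M')

/-- many-step β-reduction (reflexive-transitive closure) -/
def Red : Lam → Lam → Prop := Relation.ReflTransGen Step

/-- n-step β-reduction -/
def Steps : ℕ → Lam → Lam → Prop
  | 0, M, N => M = N
  | n+1, M, N => ∃ P, Step M P ∧ Steps n P N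

/-- Takahashi translation (Gross-Knuth complete development) -/
def star : Lam → Lam
  | var n => var n
  | lam M => lam (star M)
  | app (lam M) N => (star M).subst 0 (star N)
  | app (var n) N => app (var n) (star N)
  | app (app M₁ M₂) N => app (star (app M₁ M₂)) (star N)

/-- iterated Takahashi translation M^(n*) -/
def iterStar (n : ℕ) (M : Lam) : Lam := star^[n] M

end Lam

namespace Lam

theorem size_pos : ∀ M : Lam, 1 ≤ M.size
  | var _ => le_refl _
  | lam M => by simp [size]
  | app M N => by simp only [size]; omega

/-- L1 -/
theorem lift_lift : ∀ (M : Lam) (e d : ℕ), e ≤ d →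
    (M.lift d).lift e = (M.lift e).lift (d+1)
  | var n, e, d, h => by
    simp only [lift]; split_ifs <;> simp only [lift] <;> (try split_ifs) <;>
      first | rfl | (exfalso; omega) | (congr 1; omega)
  | lam M, e, d, h => by
    simp only [lift]; rw [lift_lift M (e+1) (d+1) (by omega)]
  | app M N, e, d, h => by
    simp only [lift]; rw [lift_lift M e d h, lift_lift N e d h]

/-- L2 -/
theorem subst_lift : ∀ (M : Lam) (x : ℕ) (N : Lam), (M.lift x).subst x N = M
  | var n, x, N => by
    simp only [lift]; split_ifs with h <;> simp only [subst] <;>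
      split_ifs <;> first | rfl | omega
  | lam M, x, N => by
    simp only [lift, subst]; rw [subst_lift M (x+1)]
  | app M P, x, N => by
    simp only [lift, subst]; rw [subst_lift M x, subst_lift P x]

/-- L3 : d ≤ x -/
theorem lift_subst_le : ∀ (M : Lam) (d x : ℕ) (N : Lam), d ≤ x →
    (M.subst x N).lift d = (M.lift d).subst (x+1) (N.lift d)
  | var n, d, x, N, h => by
    simp only [subst, lift]
    split_ifs <;> simp only [subst, lift, Nat.add_sub_cancel] <;> (try split_ifs) <;>
      first | rfl | omega | (exfalso; omega) | (congr 1; omega)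
  | lam M, d, x, N, h => by
    simp only [subst, lift]
    rw [lift_subst_le M (d+1) (x+1) _ (by omega), lift_lift N 0 d (by omega)]
  | app M P, d, x, N, h => by
    simp only [subst, lift]
    rw [lift_subst_le M d x N h, lift_subst_le P d x N h]

/-- L5 : x ≤ d -/
theorem lift_subst_ge : ∀ (M : Lam) (d x : ℕ) (N : Lam), x ≤ d →
    (M.subst x N).lift d = (M.lift (d+1)).subst x (N.lift d)
  | var n, d, x, N, h => by
    simp only [subst, lift]
    split_ifs <;> simp only [subst, lift, Nat.add_sub_cancel] <;> (try split_ifs) <;>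
      first | rfl | omega | (exfalso; omega) | (congr 1; omega)
  | lam M, d, x, N, h => by
    simp only [subst, lift]
    rw [lift_subst_ge M (d+1) (x+1) _ (by omega), lift_lift N 0 d (by omega)]
  | app M P, d, x, N, h => by
    simp only [subst, lift]
    rw [lift_subst_ge M d x N h, lift_subst_ge P d x N h]

/-- L4 : y ≤ x -/
theorem subst_subst : ∀ (A : Lam) (y x : ℕ) (B N : Lam), y ≤ x →
    (A.subst y B).subst x N = (A.subst (x+1) (N.lift y)).subst y (B.subst x N)
  | var n, y, x, B, N, h => by
    by_cases h1 : n = y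
    · subst h1; simp only [subst]
      split_ifs <;> (try simp only [subst]) <;> (try split_ifs) <;>
        first | rfl | omega | (exfalso; omega) | (congr 1; omega)
    · by_cases h2 : n = x + 1
      · subst h2; simp only [subst, Nat.add_sub_cancel]
        split_ifs <;> simp only [subst, subst_lift] <;>
          (try split_ifs) <;> first | rfl | (exfalso; omega)
      · simp only [subst]
        split_ifs <;> simp only [subst, Nat.add_sub_cancel] <;> (try split_ifs) <;>
          first | rfl | omega | (exfalso; omega) | (congr 1; omega)
  | lam A, y, x, B, N, h => by
    simp only [subst]
    rw [subst_subst A (y+1) (x+1) _ _ (by omega), lift_lift N 0 y (by omega),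
      lift_subst_le B 0 x N (by omega)]
  | app A P, y, x, B, N, h => by
    simp only [subst]
    rw [subst_subst A y x B N h, subst_subst P y x B N h]

/-- parallel reduction -/
inductive Par : Lam → Lam → Prop
  | var (n : ℕ) : Par (var n) (var n)
  | lam {M M' : Lam} : Par M M' → Par (lam M) (lam M')
  | app {M M' N N' : Lam} : Par M M' → Par N N' → Par (app M N) (app M' N')
  | beta {M M' N N' : Lam} : Par M M' → Par N N' →
      Par (app (lam M) N) (M'.subst 0 N')

theorem par_refl : ∀ M : Lam, Par M M
  | var n => Par.var n
  | lam M => Par.lam (par_refl M)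
  | app M N => Par.app (par_refl M) (par_refl N)

theorem step_par {M N : Lam} (h : Step M N) : Par M N := by
  induction h with
  | beta M N => exact Par.beta (par_refl M) (par_refl N)
  | appL N _ ih => exact Par.app ih (par_refl N)
  | appR M _ ih => exact Par.app (par_refl M) ih
  | abs _ ih => exact Par.lam ih

theorem par_lift {M M' : Lam} (h : Par M M') : ∀ d, Par (M.lift d) (M'.lift d) := by
  induction h with
  | var n => intro d; simp only [lift]; split_ifs <;> exact par_refl _
  | lam _ ih => intro d; exact Par.lam (ih (d+1))
  | app _ _ ih1 ih2 => intro d; exact Par.app (ih1 d) (ih2 d)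
  | @beta A A' B B' _ _ ih1 ih2 =>
    intro d
    have : (A'.subst 0 B').lift d = (A'.lift (d+1)).subst 0 (B'.lift d) :=
      lift_subst_ge A' d 0 B' (by omega)
    rw [this]
    exact Par.beta (ih1 (d+1)) (ih2 d)

theorem par_subst {M M' : Lam} (h : Par M M') :
    ∀ (x : ℕ) {N N' : Lam}, Par N N' → Par (M.subst x N) (M'.subst x N') := by
  induction h with
  | var n =>
    intro x N N' hN; simp only [subst]; split_ifs <;> first | exact hN | exact par_refl _
  | lam _ ih =>
    intro x N N' hN; exact Par.lam (ih (x+1) (par_lift hN 0))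
  | app _ _ ih1 ih2 =>
    intro x N N' hN; exact Par.app (ih1 x hN) (ih2 x hN)
  | @beta A A' B B' _ _ ih1 ih2 =>
    intro x N N' hN
    have key := Par.beta (ih1 (x+1) (par_lift hN 0)) (ih2 x hN)
    simp only [subst] at key ⊢
    rw [subst_subst A' 0 x B' N' (by omega)]
    exact key

theorem triangle {M N : Lam} (h : Par M N) : Par N M.star := by
  induction h with
  | var n => exact Par.var n
  | lam _ ih => exact Par.lam ih
  | @app M M' N N' h1 _ ih1 ih2 =>
    match M, h1, ih1 with
    | var n, h1, ih1 =>
      cases h1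
      exact Par.app ih1 ih2
    | lam A, h1, ih1 =>
      cases h1 with
      | lam hA =>
        cases ih1 with
        | lam hA' =>
          exact Par.beta hA' ih2
    | app A B, h1, ih1 =>
      exact Par.app ih1 ih2
  | beta _ _ ih1 ih2 =>
    simp only [star]
    exact par_subst ih1 0 ih2

theorem steps_trans : ∀ (a : ℕ) {b : ℕ} {M P N : Lam},
    Steps a M P → Steps b P N → Steps (a+b) M N
  | 0, b, M, P, N, h1, h2 => by cases h1; simpa using h2
  | a+1, b, M, P, N, h1, h2 => by
    obtain ⟨Q, hQ, hQ2⟩ := h1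
    have heq : a + 1 + b = (a + b) + 1 := by omega
    rw [heq]
    exact ⟨Q, hQ, steps_trans a hQ2 h2⟩

theorem steps_congr {f : Lam → Lam} (hf : ∀ {A B}, Step A B → Step (f A) (f B)) :
    ∀ (l : ℕ) {M N : Lam}, Steps l M N → Steps l (f M) (f N)
  | 0, M, N, h => by cases h; rfl
  | l+1, M, N, h => by
    obtain ⟨P, hP, hP2⟩ := h
    exact ⟨f P, hf hP, steps_congr hf l hP2⟩

theorem par_steps {M N : Lam} (h : Par M N) :
    ∃ l, Steps l M N ∧ l ≤ M.size - 1 := by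
  induction h with
  | var n => exact ⟨0, rfl, by simp⟩
  | @lam M M' _ ih =>
    obtain ⟨l, hl, hb⟩ := ih
    refine ⟨l, steps_congr (fun h => Step.abs h) l hl, ?_⟩
    have := size_pos M
    simp only [size]; omega
  | @app M M' N N' _ _ ih1 ih2 =>
    obtain ⟨l1, hl1, hb1⟩ := ih1
    obtain ⟨l2, hl2, hb2⟩ := ih2
    refine ⟨l1 + l2, steps_trans l1
      (steps_congr (fun h => Step.appL _ h) l1 hl1)
      (steps_congr (fun h => Step.appR _ h) l2 hl2), ?_⟩
    have := size_pos M; have := size_pos N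
    simp only [size]; omega
  | @beta A A' B B' _ _ ih1 ih2 =>
    obtain ⟨l1, hl1, hb1⟩ := ih1
    obtain ⟨l2, hl2, hb2⟩ := ih2
    have s1 : Steps l1 (app (lam A) B) (app (lam A') B) :=
      steps_congr (fun h => Step.appL _ (Step.abs h)) l1 hl1
    have s2 : Steps l2 (app (lam A') B) (app (lam A') B') :=
      steps_congr (fun h => Step.appR _ h) l2 hl2
    have s3 : Steps 1 (app (lam A') B') (A'.subst 0 B') :=
      ⟨_, Step.beta A' B', rfl⟩
    refine ⟨l1 + l2 + 1, steps_trans _ (steps_trans _ s1 s2) s3, ?_⟩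
    have := size_pos A; have := size_pos B
    simp only [size]; omega

theorem steps_red : ∀ (l : ℕ) {M N : Lam}, Steps l M N → Red M N
  | 0, M, N, h => by cases h; exact Relation.ReflTransGen.refl
  | l+1, M, N, h => by
    obtain ⟨P, hP, hP2⟩ := h
    exact Relation.ReflTransGen.head hP (steps_red l hP2)

end Lam

/-- monotonicity: if M → N then M* ↠ N*, in at most |M*| − 1 steps -/
theorem star_mono {M N : Lam} (h : Lam.Step M N) :
    Lam.Red M.star N.star ∧
      ∃ l : ℕ, Lam.Steps l M.star N.star ∧ l ≤ M.star.size - 1 := by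
  have p : Lam.Par M.star N.star := Lam.triangle (Lam.triangle (Lam.step_par h))
  obtain ⟨l, hl, hb⟩ := Lam.par_steps p
  exact ⟨Lam.steps_red l hl, l, hl, hb⟩
end

section
/- |M^(k*)| ≤ F(|M|, k) for all k, where F(m,0) = m and F(m,k+1) = 2^(F(m,k)−1); consequently |M^(k*)| < 2_k^{|M|}, the k-fold iterated exponential of |M|, for k ≥ 1. -/
namespace Lam

/-- F(m,0) = m, F(m,k+1) = 2^(F(m,k)−1) -/
def F (m : ℕ) : ℕ → ℕ
  | 0 => m
  | k+1 => 2 ^ (F m k - 1)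

/-- iterated exponentials: 2_0^m = m, 2_{n+1}^m = 2^(2_n^m) -/
def twoIter : ℕ → ℕ → ℕ
  | 0, m => m
  | n+1, m => 2 ^ twoIter n m

end Lam

namespace Lam

lemma one_le_size (M : Lam) : 1 ≤ M.size := by
  induction M <;> simp [size] <;> omega

lemma size_subst (M : Lam) : ∀ x N, (M.subst x N).size ≤ M.size * N.size := by
  induction M with
  | var n =>
    intro x N
    simp only [subst, size]
    split
    · simp
    · split <;> simp [size, one_le_size N]
  | lam M ih =>
    intro x N
    have h := ih (x+1) (N.lift 0)
    have hl : ∀ d (P : Lam), (P.lift d).size = P.size := by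
      intro d P
      induction P generalizing d with
      | var n => simp [lift]; split <;> simp [size]
      | lam P ihP => simp [lift, size, ihP]
      | app P Q ihP ihQ => simp [lift, size, ihP, ihQ]
    rw [hl] at h
    have := one_le_size N
    simp only [subst, size]
    nlinarith
  | app M P ihM ihP =>
    intro x N
    have h1 := ihM x N
    have h2 := ihP x N
    have := one_le_size N
    simp only [subst, size]
    nlinarith

lemma size_star (M : Lam) : (star M).size ≤ 2 ^ (M.size - 1) := by
  induction M using star.induct with
  | case1 n => simp [star, size]
  | case2 M ih =>
    have h1 := one_le_size M
    have h2 : (1:ℕ) ≤ 2 ^ (M.size - 1) := Nat.one_le_two_pow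
    simp only [star, size]
    calc 1 + (star M).size ≤ 2 ^ (M.size - 1) + 2 ^ (M.size - 1) := by omega
      _ = 2 ^ (M.size - 1 + 1) := by ring
      _ = 2 ^ (1 + M.size - 1) := by congr 1; omega
  | case3 M N ihM ihN =>
    have hM := one_le_size M
    have hN := one_le_size N
    simp only [star, size]
    calc ((star M).subst 0 (star N)).size
        ≤ (star M).size * (star N).size := size_subst _ _ _
      _ ≤ 2 ^ (M.size - 1) * 2 ^ (N.size - 1) := Nat.mul_le_mul ihM ihN
      _ = 2 ^ (M.size - 1 + (N.size - 1)) := (pow_add 2 _ _).symm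
      _ ≤ 2 ^ (1 + (1 + M.size) + N.size - 1) := Nat.pow_le_pow_right (by norm_num) (by omega)
  | case4 n N ih =>
    have hN := one_le_size N
    have h2 : (star N).size ≤ 2 ^ (N.size - 1) := ih
    simp only [star, size]
    have e : 1 + 1 + N.size - 1 = N.size - 1 + 2 := by omega
    rw [e, pow_add]
    have h1 : (1:ℕ) ≤ 2 ^ (N.size - 1) := Nat.one_le_two_pow
    omega
  | case5 M₁ M₂ N ihM ihN =>
    have hM : (3:ℕ) ≤ (app M₁ M₂).size := by
      have := one_le_size M₁; have := one_le_size M₂; simp [size]; omega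
    have hN := one_le_size N
    simp only [star, size] at *
    set a := 1 + M₁.size + M₂.size with ha
    have e : 1 + a + N.size - 1 = a + N.size := by omega
    rw [e]
    have k1 : (1:ℕ) ≤ 2 ^ (a + N.size - 2) := Nat.one_le_two_pow
    have k2 : (2:ℕ) ^ (a - 1) ≤ 2 ^ (a + N.size - 2) :=
      Nat.pow_le_pow_right (by norm_num) (by omega)
    have k3 : (2:ℕ) ^ (N.size - 1) ≤ 2 ^ (a + N.size - 2) :=
      Nat.pow_le_pow_right (by norm_num) (by omega)
    have k4 : (2:ℕ) ^ (a + N.size) = 2 ^ (a + N.size - 2) * 4 := by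
      have h : a + N.size = a + N.size - 2 + 2 := by omega
      rw [h, pow_add]; norm_num
    omega

lemma F_pos (m : ℕ) (hm : 1 ≤ m) (k : ℕ) : 1 ≤ F m k := by
  cases k with
  | zero => exact hm
  | succ k => exact Nat.one_le_two_pow

lemma F_lt_twoIter (m : ℕ) (hm : 1 ≤ m) (k : ℕ) (hk : 1 ≤ k) :
    F m k < twoIter k m := by
  induction k with
  | zero => omega
  | succ k ih =>
    cases Nat.eq_or_lt_of_le hk with
    | inl h =>
      have : k = 0 := by omega
      subst this
      simp only [F, twoIter]
      exact Nat.pow_lt_pow_right (by norm_num) (by omega)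
    | inr h =>
      have hk' : 1 ≤ k := by omega
      have := ih hk'
      simp only [F, twoIter]
      exact Nat.pow_lt_pow_right (by norm_num) (by omega)

end Lam

/-- |M^(k*)| ≤ F(|M|,k), and |M^(k*)| < 2_k^{|M|} for k ≥ 1 -/
theorem size_iterStar (M : Lam) (k : ℕ) :
    (Lam.iterStar k M).size ≤ Lam.F M.size k ∧
      (1 ≤ k → (Lam.iterStar k M).size < Lam.twoIter k M.size) := by
  have hm := Lam.one_le_size M
  have main : ∀ k, (Lam.iterStar k M).size ≤ Lam.F M.size k := by
    intro k
    induction k with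
    | zero => simp [Lam.iterStar, Lam.F]
    | succ k ih =>
      have : Lam.iterStar (k+1) M = Lam.star (Lam.iterStar k M) := by
        simp [Lam.iterStar, Function.iterate_succ_apply']
      rw [this]
      calc (Lam.star (Lam.iterStar k M)).size
          ≤ 2 ^ ((Lam.iterStar k M).size - 1) := Lam.size_star _
        _ ≤ 2 ^ (Lam.F M.size k - 1) :=
            Nat.pow_le_pow_right (by norm_num) (by omega)
        _ = Lam.F M.size (k+1) := rfl
  refine ⟨main k, fun hk => ?_⟩
  exact lt_of_le_of_lt (main k) (Lam.F_lt_twoIter _ hm k hk)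
end
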